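/- If G is a group with Aff(G) = Sym(G) (every permutation of G is of the form g ↦ α(g)*c with α ∈ Aut G, c ∈ G), then G is isomorphic to Z/1, Z/2, Z/3, or the Klein four-group V₄. -/

import Mathlib

/-- If every permutation of a group G is a pseudoautomorphism
g ↦ α(g) * c, then G ≅ ℤ/1, ℤ/2, ℤ/3, or the Klein four-group. -/
theorem aff_eq_sym_characterization {G : Type} [Group G]
    (h : ∀ φ : Equiv.Perm G, ∃ (α : G ≃* G) (c : G), ∀ g : G, φ g = α g * c) :
    Nonempty (G ≃* Multiplicative (ZMod 1)) ∨
    Nonempty (G ≃* Multiplicative (ZMod 2)) ∨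
    Nonempty (G ≃* Multiplicative (ZMod 3)) ∨
    Nonempty (G ≃* Multiplicative (ZMod 2 × ZMod 2)) := by
  classical
  -- Any permutation fixing 1 is multiplicative
  have key : ∀ φ : Equiv.Perm G, φ 1 = 1 → ∀ a b : G, φ (a * b) = φ a * φ b := by
    intro φ h1 a b
    obtain ⟨α, c, hc⟩ := h φ
    have hc1 : c = 1 := by have := hc 1; rw [h1, map_one, one_mul] at this; exact this.symm
    rw [hc, hc, hc, hc1, mul_one, mul_one, mul_one, map_mul]
  by_cases hsq : ∃ x : G, x * x ≠ 1
  · -- some element of order > 2 : G ≅ ℤ/3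
    obtain ⟨x, hx⟩ := hsq
    have hx1 : x ≠ 1 := by rintro rfl; exact hx (one_mul 1)
    have hxi : x⁻¹ ≠ x := by
      intro he
      apply hx
      nth_rewrite 1 [← he]
      exact inv_mul_cancel x
    have huniv : ∀ y : G, y = 1 ∨ y = x ∨ y = x⁻¹ := by
      intro y
      by_contra hy
      push_neg at hy
      obtain ⟨hy1, hyx, hyi⟩ := hy
      set σ := Equiv.swap x y with hσ
      have hσ1 : σ 1 = 1 := Equiv.swap_apply_of_ne_of_ne (Ne.symm hx1) (Ne.symm hy1)
      have := key σ hσ1 x x⁻¹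
      rw [mul_inv_cancel, hσ1, Equiv.swap_apply_left,
        Equiv.swap_apply_of_ne_of_ne hxi (fun he => hyi he.symm)] at this
      exact hyx (mul_inv_eq_one.mp this.symm)
    have hx3 : x ^ 3 = 1 := by
      rcases huniv (x * x) with h2 | h2 | h2
      · exact absurd h2 hx
      · exact absurd (mul_eq_left.mp h2) hx1
      · rw [pow_succ, pow_two, h2, inv_mul_cancel]
    have hord : orderOf x = 3 := by
      haveI : Fact (Nat.Prime 3) := ⟨by norm_num⟩
      exact orderOf_eq_prime hx3 hx1
    have htop : Subgroup.zpowers x = ⊤ := by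
      rw [Subgroup.eq_top_iff']
      intro y
      rcases huniv y with rfl | rfl | rfl
      · exact Subgroup.one_mem _
      · exact Subgroup.mem_zpowers _
      · exact Subgroup.inv_mem _ (Subgroup.mem_zpowers x)
    have hcyc : IsCyclic G := ⟨⟨x, fun y => by
      rcases huniv y with rfl | rfl | rfl
      · exact ⟨0, by simp⟩
      · exact ⟨1, by simp⟩
      · exact ⟨-1, by simp⟩⟩⟩
    have hcard : Nat.card G = 3 := by
      rw [← hord, ← Nat.card_zpowers x, htop, Subgroup.card_top]
    have e := (zmodCyclicMulEquiv hcyc).symm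
    rw [hcard] at e
    exact Or.inr (Or.inr (Or.inl ⟨e⟩))
  · push_neg at hsq
    have hinv : ∀ a : G, a⁻¹ = a := fun a => inv_eq_of_mul_eq_one_right (hsq a)
    have hcomm : ∀ a b : G, a * b = b * a := by
      intro a b
      calc a * b = (a * b)⁻¹ := (hinv _).symm
      _ = b⁻¹ * a⁻¹ := mul_inv_rev a b
      _ = b * a := by rw [hinv, hinv]
    by_cases hpair : ∃ x y : G, x ≠ 1 ∧ y ≠ 1 ∧ x ≠ y
    · -- Klein four group
      obtain ⟨x, y, hx1, hy1, hxy⟩ := hpair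
      have hxy1 : x * y ≠ 1 := by
        intro he
        apply hxy
        rw [← hinv y]
        exact eq_inv_of_mul_eq_one_left he
      have hxyx : x * y ≠ x := fun he => hy1 (mul_left_cancel (a := x) (by rw [he, mul_one]))
      have hxyy : x * y ≠ y := fun he => hx1 (mul_right_cancel (b := y) (by rw [he, one_mul]))
      have huniv : ∀ w : G, w = 1 ∨ w = x ∨ w = y ∨ w = x * y := by
        intro w
        by_contra hw
        push_neg at hw
        obtain ⟨hw1, hwx, hwy, hwxy⟩ := hw
        set σ := Equiv.swap (x * y) w with hσ
        have hσ1 : σ 1 = 1 := Equiv.swap_apply_of_ne_of_ne (Ne.symm hxy1) (Ne.symm hw1)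
        have := key σ hσ1 x y
        rw [Equiv.swap_apply_left,
          Equiv.swap_apply_of_ne_of_ne (Ne.symm hxyx) (Ne.symm hwx),
          Equiv.swap_apply_of_ne_of_ne (Ne.symm hxyy) (Ne.symm hwy)] at this
        exact hwxy this
      have h2 : ∀ k : ZMod 2, k = 0 ∨ k = 1 := by decide
      have powlem : ∀ (a : G) (m n : ZMod 2), a ^ (m + n).val = a ^ m.val * a ^ n.val := by
        intro a m n
        rcases h2 m with rfl | rfl <;> rcases h2 n with rfl | rfl
        · simp
        · simp
        · simp
        · rw [show ((1 : ZMod 2) + 1).val = 0 from rfl, show ((1 : ZMod 2)).val = 1 from rfl,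
            pow_zero, pow_one]
          exact (hsq a).symm
      let f : Multiplicative (ZMod 2 × ZMod 2) →* G :=
        { toFun := fun p => x ^ (Multiplicative.toAdd p).1.val * y ^ (Multiplicative.toAdd p).2.val
          map_one' := by simp
          map_mul' := by
            intro p q
            show x ^ ((Multiplicative.toAdd p).1 + (Multiplicative.toAdd q).1).val *
              y ^ ((Multiplicative.toAdd p).2 + (Multiplicative.toAdd q).2).val =
              x ^ (Multiplicative.toAdd p).1.val * y ^ (Multiplicative.toAdd p).2.val *
              (x ^ (Multiplicative.toAdd q).1.val * y ^ (Multiplicative.toAdd q).2.val)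
            rw [powlem, powlem, mul_assoc, ← mul_assoc (x ^ (Multiplicative.toAdd q).1.val),
              hcomm (x ^ (Multiplicative.toAdd q).1.val), mul_assoc, ← mul_assoc] }
      have hfval : ∀ m n : ZMod 2,
          f (Multiplicative.ofAdd (m, n)) = x ^ m.val * y ^ n.val := fun _ _ => rfl
      have hinj : Function.Injective f := by
        rw [injective_iff_map_eq_one]
        intro p hp
        have hpeq : p = Multiplicative.ofAdd ((Multiplicative.toAdd p).1,
            (Multiplicative.toAdd p).2) := rfl
        have hval : f p = x ^ (Multiplicative.toAdd p).1.val *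
            y ^ (Multiplicative.toAdd p).2.val := rfl
        rcases h2 (Multiplicative.toAdd p).1 with hm | hm <;>
          rcases h2 (Multiplicative.toAdd p).2 with hn | hn
        · rw [hpeq, hm, hn]; rfl
        · exfalso; apply hy1
          rw [hval, hm, hn, show ((0 : ZMod 2)).val = 0 from rfl,
            show ((1 : ZMod 2)).val = 1 from rfl, pow_zero, pow_one, one_mul] at hp
          exact hp
        · exfalso; apply hx1
          rw [hval, hm, hn, show ((0 : ZMod 2)).val = 0 from rfl,
            show ((1 : ZMod 2)).val = 1 from rfl, pow_zero, pow_one, mul_one] at hp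
          exact hp
        · exfalso; apply hxy1
          rw [hval, hm, hn, show ((1 : ZMod 2)).val = 1 from rfl, pow_one, pow_one] at hp
          exact hp
      have hsurj : Function.Surjective f := by
        intro g
        rcases huniv g with rfl | rfl | rfl | rfl
        · exact ⟨1, map_one f⟩
        · refine ⟨Multiplicative.ofAdd (1, 0), ?_⟩
          rw [hfval, show ((0 : ZMod 2)).val = 0 from rfl, show ((1 : ZMod 2)).val = 1 from rfl,
            pow_zero, pow_one, mul_one]
        · refine ⟨Multiplicative.ofAdd (0, 1), ?_⟩
          rw [hfval, show ((0 : ZMod 2)).val = 0 from rfl, show ((1 : ZMod 2)).val = 1 from rfl,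
            pow_zero, pow_one, one_mul]
        · refine ⟨Multiplicative.ofAdd (1, 1), ?_⟩
          rw [hfval, show ((1 : ZMod 2)).val = 1 from rfl, pow_one, pow_one]
      exact Or.inr (Or.inr (Or.inr ⟨(MulEquiv.ofBijective f ⟨hinj, hsurj⟩).symm⟩))
    · push_neg at hpair
      by_cases hone : ∃ x : G, x ≠ 1
      · obtain ⟨x, hx1⟩ := hone
        have huniv : ∀ y : G, y = 1 ∨ y = x := by
          intro y
          by_cases hy : y = 1
          · exact Or.inl hy
          · exact Or.inr (hpair y x hy hx1)
        have hord : orderOf x = 2 := by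
          haveI : Fact (Nat.Prime 2) := ⟨by norm_num⟩
          exact orderOf_eq_prime (by rw [pow_two]; exact hsq x) hx1
        have htop : Subgroup.zpowers x = ⊤ := by
          rw [Subgroup.eq_top_iff']
          intro y
          rcases huniv y with rfl | rfl
          · exact Subgroup.one_mem _
          · exact Subgroup.mem_zpowers _
        have hcyc : IsCyclic G := ⟨⟨x, fun y => by
          rcases huniv y with rfl | rfl
          · exact ⟨0, by simp⟩
          · exact ⟨1, by simp⟩⟩⟩
        have hcard : Nat.card G = 2 := by
          rw [← hord, ← Nat.card_zpowers x, htop, Subgroup.card_top]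
        have e := (zmodCyclicMulEquiv hcyc).symm
        rw [hcard] at e
        exact Or.inr (Or.inl ⟨e⟩)
      · push_neg at hone
        haveI : Subsingleton G := ⟨fun a b => by rw [hone a, hone b]⟩
        have hcard : Nat.card G = 1 := Nat.card_of_subsingleton 1
        haveI hcyc : IsCyclic G := isCyclic_of_subsingleton
        have e := (zmodCyclicMulEquiv hcyc).symm
        rw [hcard] at e
        exact Or.inl ⟨e⟩
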